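/- Derivability of Redko's star-continuity identities: for any commutative regular expression e and any natural number n > 0, the identity e* ≡ e^{<n} · (e^n)* is derivable from the finitary axioms. -/
import Mathlib


namespace CKAnote
set_option linter.unusedSectionVars false

/-- Commutative regular expressions over an alphabet `α`. -/
inductive CRE (α : Type) where
  | zero : CRE α
  | one : CRE α
  | letter : α → CRE α
  | mul : CRE α → CRE α → CRE α
  | union : CRE α → CRE α → CRE α
  | star : CRE α → CRE α

variable {α : Type} [Fintype α] [DecidableEq α]

/-- Semantics of a commutative regular expression as a set of Parikh vectors. -/
def sem : CRE α → Set (α → ℕ)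
  | .zero => ∅
  | .one => {0}
  | .letter a => {Pi.single a 1}
  | .mul e f => {w | ∃ u ∈ sem e, ∃ v ∈ sem f, w = u + v}
  | .union e f => sem e ∪ sem f
  | .star e => ↑(AddSubmonoid.closure (sem e))

/-- Provable equality: the smallest congruence containing the axioms of
commutative Kleene algebra (where `e ≤ f` abbreviates `e ∪ f ≡ f`). -/
inductive CKA : CRE α → CRE α → Prop
  | refl (e : CRE α) : CKA e e
  | symm {e f : CRE α} : CKA e f → CKA f e
  | trans {e f g : CRE α} : CKA e f → CKA f g → CKA e g
  | mul_congr {e e' f f' : CRE α} : CKA e e' → CKA f f' → CKA (e.mul f) (e'.mul f')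
  | union_congr {e e' f f' : CRE α} : CKA e e' → CKA f f' → CKA (e.union f) (e'.union f')
  | star_congr {e e' : CRE α} : CKA e e' → CKA e.star e'.star
  | mul_assoc (e f g : CRE α) : CKA (e.mul (f.mul g)) ((e.mul f).mul g)
  | mul_comm (e f : CRE α) : CKA (e.mul f) (f.mul e)
  | one_mul (e : CRE α) : CKA (CRE.one.mul e) e
  | union_assoc (e f g : CRE α) : CKA (e.union (f.union g)) ((e.union f).union g)
  | union_comm (e f : CRE α) : CKA (e.union f) (f.union e)
  | union_idem (e : CRE α) : CKA (e.union e) e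
  | zero_union (e : CRE α) : CKA (CRE.zero.union e) e
  | zero_mul (e : CRE α) : CKA (CRE.zero.mul e) CRE.zero
  | left_distrib (e f g : CRE α) : CKA (e.mul (f.union g)) ((e.mul f).union (e.mul g))
  | star_unfold (e : CRE α) : CKA ((CRE.one.union (e.mul e.star)).union e.star) e.star
  | star_lfp {e f : CRE α} : CKA ((e.mul f).union f) f → CKA ((e.star.mul f).union f) f

/-- `e ≤ f`, i.e. `e ∪ f ≡ f`. -/
def leq (e f : CRE α) : Prop := CKA (e.union f) f

/-- `e^n`, the `n`-fold product of `e` with itself. -/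
def pow (e : CRE α) : ℕ → CRE α
  | 0 => CRE.one
  | n + 1 => e.mul (pow e n)

/-- `e^{<n}`, i.e. `(e ∪ 1)^(n-1)` for `n > 0` and `0` for `n = 0`. -/
def ltPow (e : CRE α) : ℕ → CRE α
  | 0 => CRE.zero
  | n + 1 => pow (e.union CRE.one) n

/-- Finite union of a list of expressions. -/
def unionList : List (CRE α) → CRE α
  | [] => CRE.zero
  | e :: l => e.union (unionList l)

/-- Finite product of a list of expressions. -/
def prodList : List (CRE α) → CRE α
  | [] => CRE.one
  | e :: l => e.mul (prodList l)

/-- `expr(u)`: the product over `a ∈ α` of `u a` copies of the letter `a`. -/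
noncomputable def exprVec (u : α → ℕ) : CRE α :=
  prodList ((Finset.univ : Finset α).toList.map (fun a => pow (CRE.letter a) (u a)))

/-- The union `⋃_{b ∈ B} expr(b)` for a finite set of Parikh vectors `B`. -/
noncomputable def unionVecs (B : Finset (α → ℕ)) : CRE α :=
  unionList (B.toList.map exprVec)

/-- The linear expression `expr(u) · (⋃_{b ∈ B} expr(b))*`. -/
noncomputable def linExpr (u : α → ℕ) (B : Finset (α → ℕ)) : CRE α :=
  (exprVec u).mul (unionVecs B).star

/-- A finite set of Parikh vectors is independent when every Parikh vector
admits at most one representation as an `ℕ`-linear combination of its elements. -/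
def Independent (B : Finset (α → ℕ)) : Prop :=
  ∀ c d : (α → ℕ) → ℕ, (∑ b ∈ B, c b • b) = (∑ b ∈ B, d b • b) → ∀ b ∈ B, c b = d b

/-- The semilinear expression associated to a list of linear data:
the finite union of the corresponding linear expressions. -/
noncomputable def semiLin (L : List ((α → ℕ) × Finset (α → ℕ))) : CRE α :=
  unionList (L.map (fun p => linExpr p.1 p.2))

/-- The dimension of a semilinear expression: the maximum of the dimensions
of its linear components. -/
def dimSL (L : List ((α → ℕ) × Finset (α → ℕ))) : ℕ :=
  (L.map (fun p => p.2.card)).foldr max 0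

/-- Finitary (star-free) expressions. -/
def NoStar : CRE α → Prop
  | .zero => True
  | .one => True
  | .letter _ => True
  | .mul e f => NoStar e ∧ NoStar f
  | .union e f => NoStar e ∧ NoStar f
  | .star _ => False

/-- Coordinatewise embedding of `ℕ^α` into `ℚ^α`. -/
def toQ (v : α → ℕ) : α → ℚ := fun a => (v a : ℚ)

section Aux

lemma leq_refl (e : CRE α) : leq e e := CKA.union_idem e

lemma leq_of_cka {e f : CRE α} (h : CKA e f) : leq e f :=
  CKA.trans (CKA.union_congr h (CKA.refl f)) (CKA.union_idem f)

lemma leq_congr {e e' f f' : CRE α} (he : CKA e e') (hf : CKA f f') (h : leq e f) : leq e' f' :=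
  CKA.trans (CKA.union_congr he.symm hf.symm) (CKA.trans h hf)

lemma leq_trans {e f g : CRE α} (h1 : leq e f) (h2 : leq f g) : leq e g := by
  have : CKA (e.union g) (e.union (f.union g)) :=
    CKA.union_congr (CKA.refl e) h2.symm
  refine CKA.trans this (CKA.trans (CKA.union_assoc _ _ _) ?_)
  exact CKA.trans (CKA.union_congr h1 (CKA.refl g)) h2

lemma leq_antisymm {e f : CRE α} (h1 : leq e f) (h2 : leq f e) : CKA e f :=
  CKA.trans h2.symm (CKA.trans (CKA.union_comm f e) h1)

lemma le_union_left (e f : CRE α) : leq e (e.union f) := by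
  have : CKA ((e.union e).union f) (e.union f) :=
    CKA.union_congr (CKA.union_idem e) (CKA.refl f)
  exact CKA.trans (CKA.union_assoc e e f) this

lemma le_union_right (e f : CRE α) : leq f (e.union f) := by
  refine leq_congr (CKA.refl f) (CKA.union_comm f e) ?_
  exact le_union_left f e

lemma union_leq {e f g : CRE α} (h1 : leq e g) (h2 : leq f g) : leq (e.union f) g := by
  refine CKA.trans (CKA.symm (CKA.union_assoc e f g)) ?_
  exact CKA.trans (CKA.union_congr (CKA.refl e) h2) h1

lemma mul_one (e : CRE α) : CKA (e.mul CRE.one) e :=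
  CKA.trans (CKA.mul_comm e CRE.one) (CKA.one_mul e)

lemma mul_leq {e e' f f' : CRE α} (h1 : leq e e') (h2 : leq f f') : leq (e.mul f) (e'.mul f') := by
  have step1 : leq (e.mul f) (e'.mul f) := by
    have d : CKA ((e.union e').mul f) ((e.mul f).union (e'.mul f)) := by
      refine CKA.trans (CKA.mul_comm _ _) ?_
      refine CKA.trans (CKA.left_distrib f e e') ?_
      exact CKA.union_congr (CKA.mul_comm f e) (CKA.mul_comm f e')
    exact CKA.trans d.symm (CKA.mul_congr h1 (CKA.refl f))
  have step2 : leq (e'.mul f) (e'.mul f') := by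
    have d : CKA (e'.mul (f.union f')) ((e'.mul f).union (e'.mul f')) :=
      CKA.left_distrib e' f f'
    exact CKA.trans d.symm (CKA.mul_congr (CKA.refl e') h2)
  exact leq_trans step1 step2

lemma one_le_star (e : CRE α) : leq CRE.one e.star := by
  have h := CKA.star_unfold (α := α) e
  have h1 : leq (CRE.one.union (e.mul e.star)) e.star := h
  exact leq_trans (le_union_left _ _) h1

lemma mul_star_le_star (e : CRE α) : leq (e.mul e.star) e.star := by
  have h1 : leq (CRE.one.union (e.mul e.star)) e.star := CKA.star_unfold e
  exact leq_trans (le_union_right _ _) h1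

lemma le_star (e : CRE α) : leq e e.star := by
  have : leq (e.mul CRE.one) (e.mul e.star) := mul_leq (leq_refl e) (one_le_star e)
  exact leq_trans (leq_congr (mul_one e) (CKA.refl _) (leq_refl _)) (leq_trans this (mul_star_le_star e))

lemma star_mul_self_le (e : CRE α) : leq (e.star.mul e.star) e.star := by
  have h : CKA ((e.mul e.star).union e.star) e.star := mul_star_le_star e
  have h2 := CKA.star_lfp h
  exact h2

/-- If `x ≤ e*` then `x* ≤ e*`. -/
lemma star_leq_star_of_leq {x e : CRE α} (h : leq x e.star) : leq x.star e.star := by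
  have hx : leq (x.mul e.star) e.star :=
    leq_trans (mul_leq h (leq_refl _)) (star_mul_self_le e)
  have h2 : leq (x.star.mul e.star) e.star := CKA.star_lfp hx
  have h3 : leq x.star (x.star.mul e.star) := by
    refine leq_congr (mul_one x.star) (CKA.refl _) ?_
    exact mul_leq (leq_refl _) (one_le_star e)
  exact leq_trans h3 h2

lemma pow_leq {e f : CRE α} (h : leq e f) : ∀ m, leq (pow e m) (pow f m)
  | 0 => leq_refl _
  | m + 1 => mul_leq h (pow_leq h m)

lemma pow_le_star (e : CRE α) : ∀ m, leq (pow e m) e.star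
  | 0 => one_le_star e
  | m + 1 => leq_trans (mul_leq (leq_refl e) (pow_le_star e m)) (mul_star_le_star e)

lemma one_le_pow_union_one (e : CRE α) : ∀ m, leq CRE.one (pow (e.union CRE.one) m)
  | 0 => leq_refl _
  | m + 1 => by
    have h1 : leq CRE.one (e.union CRE.one) := le_union_right e CRE.one
    have := mul_leq h1 (one_le_pow_union_one e m)
    exact leq_trans (leq_of_cka (CKA.one_mul CRE.one).symm) this

lemma star_pow_le (e : CRE α) : ∀ m, leq (pow e.star m) e.star
  | 0 => one_le_star e
  | m + 1 => leq_trans (mul_leq (leq_refl _) (star_pow_le e m)) (star_mul_self_le e)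

lemma pow_union_one_le_star (e : CRE α) (m : ℕ) : leq (pow (e.union CRE.one) m) e.star := by
  have h1 : leq (e.union CRE.one) e.star := union_leq (le_star e) (one_le_star e)
  exact leq_trans (pow_leq h1 m) (star_pow_le e m)

/-- `e · (e∪1)^m ≤ (e∪1)^m ∪ e^(m+1)`. -/
lemma key (e : CRE α) : ∀ m, leq (e.mul (pow (e.union CRE.one) m))
    ((pow (e.union CRE.one) m).union (pow e (m + 1)))
  | 0 => by
    have : CKA (e.mul (pow (e.union CRE.one) 0)) e := mul_one e
    refine leq_congr this.symm (CKA.refl _) ?_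
    have h2 : CKA (pow e 1) e := mul_one e
    exact leq_congr (CKA.refl e) (CKA.union_congr (CKA.refl CRE.one) h2.symm) (le_union_right _ _)
  | m + 1 => by
    set g := e.union CRE.one with hg
    -- e · (g · g^m) ≡ g · (e · g^m)
    have comm : CKA (e.mul (pow g (m+1))) (g.mul (e.mul (pow g m))) := by
      show CKA (e.mul (g.mul (pow g m))) _
      refine CKA.trans (CKA.mul_assoc _ _ _) ?_
      refine CKA.trans (CKA.mul_congr (CKA.mul_comm e g) (CKA.refl _)) ?_
      exact CKA.symm (CKA.mul_assoc _ _ _)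
    have step : leq (g.mul (e.mul (pow g m))) (g.mul ((pow g m).union (pow e (m+1)))) :=
      mul_leq (leq_refl g) (key e m)
    have distrib : CKA (g.mul ((pow g m).union (pow e (m+1))))
        ((g.mul (pow g m)).union (g.mul (pow e (m+1)))) := CKA.left_distrib _ _ _
    -- g · e^(m+1) = (e∪1)·e^(m+1) = e^(m+2) ∪ e^(m+1) ≤ e^(m+2) ∪ g^(m+1)
    have hright : leq (g.mul (pow e (m+1))) ((pow g (m+1)).union (pow e (m+2))) := by
      have d : CKA (g.mul (pow e (m+1))) ((e.mul (pow e (m+1))).union (CRE.one.mul (pow e (m+1)))) := by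
        refine CKA.trans (CKA.mul_comm _ _) ?_
        refine CKA.trans (CKA.left_distrib (pow e (m+1)) e CRE.one) ?_
        exact CKA.union_congr (CKA.mul_comm _ _) (CKA.mul_comm _ _)
      refine leq_congr d.symm (CKA.refl _) ?_
      refine union_leq ?_ ?_
      · exact le_union_right _ _
      · refine leq_trans (leq_of_cka (CKA.one_mul _)) ?_
        refine leq_trans (pow_leq (le_union_left e CRE.one) (m+1)) (le_union_left _ _)
    have hleft : leq (g.mul (pow g m)) ((pow g (m+1)).union (pow e (m+2))) :=
      le_union_left _ _
    refine leq_congr comm.symm (CKA.refl _) ?_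
    refine leq_trans step ?_
    refine leq_congr distrib.symm (CKA.refl _) ?_
    exact union_leq hleft hright

end Aux

/-- Redko's star-continuity identities are derivable: for `n > 0`,
`e* ≡ e^{<n} · (e^n)*`. -/
theorem star_continuity (e : CRE α) (n : ℕ) (hn : 0 < n) :
    CKA e.star ((ltPow e n).mul (pow e n).star) := by
  obtain ⟨m, rfl⟩ : ∃ m, n = m + 1 := ⟨n - 1, (Nat.succ_pred_eq_of_pos hn).symm⟩
  set g := e.union CRE.one with hg
  set f := (ltPow e (m+1)).mul (pow e (m+1)).star with hf
  have hdef : f = (pow g m).mul (pow e (m+1)).star := rfl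
  -- direction f ≤ e*
  have hfe : leq f e.star := by
    rw [hdef]
    have h1 : leq (pow g m) e.star := pow_union_one_le_star e m
    have h2 : leq (pow e (m+1)).star e.star :=
      star_leq_star_of_leq (pow_le_star e (m+1))
    exact leq_trans (mul_leq h1 h2) (star_mul_self_le e)
  -- direction e* ≤ f
  have hef : leq e.star f := by
    have hone : leq CRE.one f := by
      rw [hdef]
      have := mul_leq (one_le_pow_union_one e m) (one_le_star (pow e (m+1)))
      exact leq_trans (leq_of_cka (CKA.one_mul CRE.one).symm) this
    have hstep : leq (e.mul f) f := by
      rw [hdef]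
      have assoc : CKA (e.mul ((pow g m).mul (pow e (m+1)).star))
          ((e.mul (pow g m)).mul (pow e (m+1)).star) := CKA.mul_assoc _ _ _
      refine leq_congr assoc.symm (CKA.refl _) ?_
      have h1 : leq ((e.mul (pow g m)).mul (pow e (m+1)).star)
          (((pow g m).union (pow e (m+1))).mul (pow e (m+1)).star) :=
        mul_leq (key e m) (leq_refl _)
      refine leq_trans h1 ?_
      have d : CKA (((pow g m).union (pow e (m+1))).mul (pow e (m+1)).star)
          (((pow g m).mul (pow e (m+1)).star).union ((pow e (m+1)).mul (pow e (m+1)).star)) := by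
        refine CKA.trans (CKA.mul_comm _ _) ?_
        refine CKA.trans (CKA.left_distrib _ _ _) ?_
        exact CKA.union_congr (CKA.mul_comm _ _) (CKA.mul_comm _ _)
      refine leq_congr d.symm (CKA.refl _) ?_
      refine union_leq (leq_refl _) ?_
      have h2 : leq ((pow e (m+1)).mul (pow e (m+1)).star) (pow e (m+1)).star :=
        mul_star_le_star _
      refine leq_trans h2 ?_
      refine leq_trans (leq_of_cka (CKA.one_mul _).symm) ?_
      exact mul_leq (one_le_pow_union_one e m) (leq_refl _)
    have hlfp : leq (e.star.mul f) f := CKA.star_lfp hstep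
    have h3 : leq e.star (e.star.mul f) := by
      refine leq_congr (mul_one e.star) (CKA.refl _) ?_
      exact mul_leq (leq_refl _) hone
    exact leq_trans h3 hlfp
  exact leq_antisymm hef hfe

end CKAnote
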